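/- arXiv:math/9907031 — 3 statements merged into one kernel-verified Lean document; each statement's English description precedes it below -/
import Mathlib

section
/- Let (g, d, [·,·]) be a differential graded Lie algebra over a field k of characteristic zero, η : g → g a linear map of degree −1, and μₙ the maps of Theorem 3.1 (μ₁ = d, μ₂ = (dη+ηd)[·,·], μₙ defined recursively via η). Define the Kuranishi map by its components K₁(v₁) = v₁, K₂(v₁,v₂) = η[v₁,v₂], and Kₙ = 0 for n ≥ 3. Then for every n ≥ 1 and all homogeneous v₁,…,vₙ ∈ g the L∞-morphism equations into the abelian differential graded Lie algebra (g, d, 0) hold: d Kₙ(v₁,…,vₙ) = Σ_{k+l=n+1, k,l≥1} Σ_{σ∈Sh(k,n)} (−1)^{σ+k(l−1)} e(σ) K_l(μₖ(v_{σ(1)},…,v_{σ(k)}), v_{σ(k+1)},…,v_{σ(n)}). In particular, since K₁ is the identity, the Kuranishi map is an L∞-isomorphism from (g, μ_*) to (g, d, 0). -/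
open Finset
open scoped TensorProduct

noncomputable section

/-- The Koszul sign `e(σ; v₁,…,vₙ)` of a permutation `σ` with respect to the (integer)
degrees `deg i` of homogeneous elements, defined by
`v_{σ(1)} ∧ … ∧ v_{σ(n)} = (-1)^σ e(σ) v₁ ∧ … ∧ vₙ`. -/
def koszulSign (k : Type*) [Field k] {n : ℕ} (deg : Fin n → ℤ) (σ : Equiv.Perm (Fin n)) : k :=
  ∏ p ∈ Finset.univ.filter (fun p : Fin n × Fin n => p.1 < p.2 ∧ σ p.2 < σ p.1),
    (-1 : k) ^ (deg (σ p.1) * deg (σ p.2))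

/-- The sign `(-1)^σ` of a permutation, as an element of the field `k`. -/
def permSign (k : Type*) [Field k] {n : ℕ} (σ : Equiv.Perm (Fin n)) : k :=
  ((Equiv.Perm.sign σ : ℤ) : k)

/-- `Sh(p,n)`: the permutations of `{0,…,n-1}` that are strictly increasing on the first `p`
positions and on the remaining `n - p` positions. -/
def shuffles (p n : ℕ) : Finset (Equiv.Perm (Fin n)) :=
  Finset.univ.filter fun σ =>
    (∀ a b : Fin n, (a : ℕ) < (b : ℕ) → (b : ℕ) < p → σ a < σ b) ∧
    (∀ a b : Fin n, (a : ℕ) < (b : ℕ) → p ≤ (a : ℕ) → σ a < σ b)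

/-- A differential graded Lie algebra over `k` on the carrier `V`, presented by its
(internal) ℤ-grading, differential `d` of degree `+1` and bracket of degree `0`,
satisfying graded antisymmetry, the graded Jacobi identity and the graded Leibniz rule. -/
structure GradedDGLA (k V : Type*) [Field k] [AddCommGroup V] [Module k V] where
  grade : ℤ → Submodule k V
  internal : DirectSum.IsInternal grade
  d : V →ₗ[k] V
  bracket : V →ₗ[k] V →ₗ[k] V
  d_grade : ∀ (i : ℤ) (v : V), v ∈ grade i → d v ∈ grade (i + 1)
  bracket_grade : ∀ (i j : ℤ) (x y : V), x ∈ grade i → y ∈ grade j →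
    bracket x y ∈ grade (i + j)
  d_sq : ∀ v : V, d (d v) = 0
  antisymm : ∀ (i j : ℤ) (x y : V), x ∈ grade i → y ∈ grade j →
    bracket x y = -((-1 : k) ^ (i * j) • bracket y x)
  jacobi : ∀ (i j l : ℤ) (x y z : V), x ∈ grade i → y ∈ grade j → z ∈ grade l →
    (-1 : k) ^ (i * l) • bracket (bracket x y) z
      + (-1 : k) ^ (j * i) • bracket (bracket y z) x
      + (-1 : k) ^ (l * j) • bracket (bracket z x) y = 0
  leibniz : ∀ (i : ℤ) (x y : V), x ∈ grade i →
    d (bracket x y) = bracket (d x) y + (-1 : k) ^ i • bracket x (d y)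

/-- The `L∞`-operations `μₙ` of Theorem 3.1, built from a differential `d`, a bracket `br`
and a degree `-1` operator `η`:  `μ₁ = d`, `μ₂ = (dη + ηd)[·,·]`, and for `n ≥ 3`
`μₙ(v₁,…,vₙ) = (-1)ⁿ ∑_{σ ∈ Sh(n-1,n)} (-1)^σ e(σ) η[μ_{n-1}(v_{σ(1)},…,v_{σ(n-1)}), v_{σ(n)}]`.
The arguments are homogeneous of degrees recorded in `deg`. -/
def muRec {k : Type*} [Field k] {W : Type*} [AddCommGroup W] [Module k W]
    (d : W →ₗ[k] W) (br : W →ₗ[k] W →ₗ[k] W) (η : W →ₗ[k] W) :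
    (n : ℕ) → (Fin n → ℤ) → (Fin n → W) → W
  | 0, _, _ => 0
  | 1, _, v => d (v 0)
  | 2, _, v => d (η (br (v 0) (v 1))) + η (d (br (v 0) (v 1)))
  | (n + 3), deg, v =>
      (-1 : k) ^ (n + 3) •
        ∑ σ ∈ shuffles (n + 2) (n + 3),
          (permSign k σ * koszulSign k deg σ) •
            η (br
                (muRec d br η (n + 2) (fun i => deg (σ i.castSucc))
                  (fun i => v (σ i.castSucc)))
                (v (σ (Fin.last (n + 2)))))

/-- The general right-hand side `∑_{k+l=n+1} ∑_{σ ∈ Sh(k,n)} (-1)^{σ + k(l-1)} e(σ)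
F_l(μ_k(v_{σ(1)},…,v_{σ(k)}), v_{σ(k+1)},…,v_{σ(n)})` appearing both in the higher Jacobi
identities (with `F = μ`) and in the `L∞`-morphism equations into an abelian dg Lie algebra. -/
def linfRHS (k : Type*) [Field k] {W : Type*} [AddCommGroup W] [Module k W]
    (μ F : (m : ℕ) → (Fin m → ℤ) → (Fin m → W) → W)
    (n : ℕ) (deg : Fin n → ℤ) (v : Fin n → W) : W :=
  ∑ p : Fin n, ∑ σ ∈ shuffles ((p : ℕ) + 1) n,
    (permSign k σ * (-1 : k) ^ (((p : ℕ) + 1) * (n - 1 - (p : ℕ))) * koszulSign k deg σ) •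
      F (n - (p : ℕ))
        (fun i =>
          if (i : ℕ) = 0 then
            (∑ j : Fin ((p : ℕ) + 1),
              deg (σ ⟨(j : ℕ), by have := j.isLt; have := p.isLt; omega⟩)) + 1 - ((p : ℕ) : ℤ)
          else
            deg (σ ⟨(p : ℕ) + (i : ℕ), by have := i.isLt; have := p.isLt; omega⟩))
        (fun i =>
          if (i : ℕ) = 0 then
            μ ((p : ℕ) + 1)
              (fun j => deg (σ ⟨(j : ℕ), by have := j.isLt; have := p.isLt; omega⟩))
              (fun j => v (σ ⟨(j : ℕ), by have := j.isLt; have := p.isLt; omega⟩))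
          else
            v (σ ⟨(p : ℕ) + (i : ℕ), by have := i.isLt; have := p.isLt; omega⟩))

/-- The `n`-th higher Jacobi expression `Φₙ` of a family `μ` of multilinear operations. -/
def higherJacobi (k : Type*) [Field k] {W : Type*} [AddCommGroup W] [Module k W]
    (μ : (m : ℕ) → (Fin m → ℤ) → (Fin m → W) → W)
    (n : ℕ) (deg : Fin n → ℤ) (v : Fin n → W) : W :=
  linfRHS k μ μ n deg v

/-- The Kuranishi map: `K₁ = id`, `K₂ = η[·,·]`, `Kₙ = 0` for `n ≥ 3` (and `n = 0`). -/
def kurMap {k : Type*} [Field k] {W : Type*} [AddCommGroup W] [Module k W]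
    (br : W →ₗ[k] W →ₗ[k] W) (η : W →ₗ[k] W) :
    (n : ℕ) → (Fin n → ℤ) → (Fin n → W) → W
  | 1, _, v => v 0
  | 2, _, v => η (br (v 0) (v 1))
  | _, _, _ => 0

section Helpers

variable {k : Type*} [Field k]

lemma shuffles_self (n : ℕ) : shuffles n n = {1} := by
  ext σ
  simp only [shuffles, Finset.mem_filter, Finset.mem_univ, true_and, Finset.mem_singleton]
  constructor
  · rintro ⟨h1, -⟩
    have hmono : StrictMono (σ : Fin n → Fin n) := fun a b hab => h1 a b hab b.isLt
    have inst : WellFoundedLT (Fin n) := inferInstance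
    have h2 : (σ : Fin n → Fin n) = (id : Fin n → Fin n) :=
      (@StrictMono.range_inj (Fin n) (Fin n) _ _ inst _ _ hmono strictMono_id).1
        (by simp [Set.range_eq_univ.2 σ.surjective])
    exact Equiv.ext fun x => congrFun h2 x
  · rintro rfl
    refine ⟨?_, ?_⟩ <;> intro a b hab _ <;>
      · rw [Equiv.Perm.one_apply, Equiv.Perm.one_apply]
        exact Fin.lt_def.2 hab

lemma permSign_one (n : ℕ) : permSign k (1 : Equiv.Perm (Fin n)) = 1 := by
  simp [permSign]

lemma koszulSign_one (n : ℕ) (deg : Fin n → ℤ) : koszulSign k deg 1 = 1 := by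
  unfold koszulSign
  rw [Finset.filter_false_of_mem, Finset.prod_empty]
  rintro ⟨a, b⟩ - ⟨h1, h2⟩
  simp only [Equiv.Perm.one_apply] at h2
  exact absurd h2 (lt_asymm h1)

lemma kurMap_ge3 {W : Type*} [AddCommGroup W] [Module k W]
    (br : W →ₗ[k] W →ₗ[k] W) (η : W →ₗ[k] W)
    (r : ℕ) (hr : 3 ≤ r) (deg : Fin r → ℤ) (v : Fin r → W) :
    kurMap br η r deg v = 0 := by
  match r, hr with
  | (s+3), _ => rfl

lemma kurMap_eval1 {W : Type*} [AddCommGroup W] [Module k W]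
    (br : W →ₗ[k] W →ₗ[k] W) (η : W →ₗ[k] W)
    (r : ℕ) (hr : r = 1) (deg : Fin r → ℤ) (v : Fin r → W) :
    kurMap br η r deg v = v ⟨0, by omega⟩ := by subst hr; rfl

lemma kurMap_eval2 {W : Type*} [AddCommGroup W] [Module k W]
    (br : W →ₗ[k] W →ₗ[k] W) (η : W →ₗ[k] W)
    (r : ℕ) (hr : r = 2) (deg : Fin r → ℤ) (v : Fin r → W) :
    kurMap br η r deg v = η (br (v ⟨0, by omega⟩) (v ⟨1, by omega⟩)) := by subst hr; rfl

end Helpers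
set_option maxHeartbeats 1000000 in
theorem statement1 {k V : Type*} [Field k] [CharZero k] [AddCommGroup V] [Module k V]
    (D : GradedDGLA k V) (η : V →ₗ[k] V)
    (hη : ∀ (i : ℤ) (v : V), v ∈ D.grade i → η v ∈ D.grade (i - 1))
    (n : ℕ) (hn : 1 ≤ n) (deg : Fin n → ℤ) (v : Fin n → V)
    (hv : ∀ j, v j ∈ D.grade (deg j)) :
    D.d (kurMap D.bracket η n deg v)
      = linfRHS k (muRec D.d D.bracket η) (kurMap D.bracket η) n deg v := by
  match n, hn with
  | 1, _ =>
    simp [linfRHS, shuffles_self, permSign_one, koszulSign_one, kurMap, muRec]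
  | 2, _ =>
    have h12 : shuffles 1 2 = {1, Equiv.swap 0 1} := by decide
    have hks : koszulSign k deg (Equiv.swap 0 1) = (-1:k)^(deg 1 * deg 0) := by
      unfold koszulSign
      rw [show (Finset.univ.filter (fun p : Fin 2 × Fin 2 => p.1 < p.2 ∧ (Equiv.swap 0 1) p.2 < (Equiv.swap 0 1) p.1)) = {((0:Fin 2),(1:Fin 2))} from by decide]
      simp
    have hsw : permSign k (Equiv.swap (0:Fin 2) 1) = -1 := by
      simp [permSign, Equiv.Perm.sign_swap]
    simp only [linfRHS, Fin.sum_univ_two, h12, shuffles_self, Finset.sum_singleton,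
      Finset.sum_insert (show (1:Equiv.Perm (Fin 2)) ∉ ({Equiv.swap 0 1} : Finset (Equiv.Perm (Fin 2))) from by decide), permSign_one, koszulSign_one, hks, hsw, kurMap, muRec]
    norm_num
    rw [h12, shuffles_self]
    rw [Finset.sum_insert (show (1:Equiv.Perm (Fin 2)) ∉ ({Equiv.swap 0 1} : Finset (Equiv.Perm (Fin 2))) from by decide)]
    simp only [Finset.sum_singleton, permSign_one, koszulSign_one, hks, hsw, one_mul,
      Fin.val_zero, Fin.val_one, Nat.sub_zero, one_ne_zero, ↓reduceIte, Equiv.Perm.one_apply, Equiv.swap_apply_left, Equiv.swap_apply_right, one_smul, neg_smul,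
      neg_mul, one_mul]
    have hd1 : D.d (v 1) ∈ D.grade (deg 1 + 1) := D.d_grade _ _ (hv 1)
    have h1 := D.leibniz (deg 0) (v 0) (v 1) (hv 0)
    have h2 := D.antisymm (deg 0) (deg 1 + 1) (v 0) (D.d (v 1)) (hv 0) hd1
    have hne : (-1:k) ≠ 0 := by norm_num
    have hsgn : (-1:k)^(deg 0) * (-1:k)^(deg 0 * (deg 1 + 1)) = (-1:k)^(deg 1 * deg 0) := by
      rw [← zpow_add₀ hne]
      have he : deg 0 + deg 0 * (deg 1 + 1) = deg 1 * deg 0 + 2 * deg 0 := by ring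
      rw [he, zpow_add₀ hne,
        show ((-1:k))^(2 * deg 0) = 1 from by rw [zpow_mul]; norm_num, mul_one]
    have key : η (D.d ((D.bracket (v 0)) (v 1)))
        = η ((D.bracket (D.d (v 0))) (v 1))
          - (-1:k)^(deg 1 * deg 0) • η ((D.bracket (D.d (v 1))) (v 0)) := by
      rw [h1, h2, map_add, map_smul, map_neg, map_smul, smul_neg, smul_smul, hsgn]
      abel
    rw [key]
    abel
  | (m+3), _ =>
    rw [show kurMap D.bracket η (m+3) deg v = 0 from rfl, map_zero]
    symm
    unfold linfRHS
    rw [← Finset.sum_subset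
      (Finset.subset_univ ({⟨m+1, by omega⟩, ⟨m+2, by omega⟩} : Finset (Fin (m+3))))]
    · rw [Finset.sum_pair (show (⟨m+1, by omega⟩ : Fin (m+3)) ≠ ⟨m+2, by omega⟩ from by
        simp [Fin.ext_iff])]
      simp only [Fin.val_mk]
      simp only [show m + 1 + 1 = m + 2 from rfl, show m + 2 + 1 = m + 3 from rfl,
        show m + 3 - 1 - (m + 1) = 1 from by omega, show m + 3 - (m + 1) = 2 from by omega,
        show m + 3 - 1 - (m + 2) = 0 from by omega, show m + 3 - (m + 2) = 1 from by omega,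
        pow_zero, mul_one, shuffles_self, Finset.sum_singleton, permSign_one, koszulSign_one,
        one_mul, one_smul]
      rw [kurMap_eval1 D.bracket η _ (by omega), show ((m+3)*0) = 0 from by omega, pow_zero,
        one_smul]
      rw [if_pos rfl]
      simp only [Equiv.Perm.one_apply, Fin.eta]
      have hmu : (muRec D.d D.bracket η (m + 2 + 1) (fun j => deg j) fun j => v j)
          = (-1:k)^(m+3) • ∑ σ ∈ shuffles (m+2) (m+3),
              (permSign k σ * koszulSign k deg σ) •
                η (D.bracket
                    (muRec D.d D.bracket η (m+2) (fun i => deg (σ i.castSucc))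
                      (fun i => v (σ i.castSucc)))
                    (v (σ (Fin.last (m+2))))) := rfl
      rw [hmu, add_eq_zero_iff_eq_neg, ← neg_smul,
        show -((-1:k)^(m+3)) = (-1:k)^(m+2) from by rw [pow_succ]; ring,
        Finset.smul_sum]
      refine Finset.sum_congr rfl fun σ hσ => ?_
      rw [kurMap_eval2 D.bracket η _ (by omega), smul_smul]
      congr 1
      ring
    · intro p _ hp
      refine Finset.sum_eq_zero fun σ _ => ?_
      have hp3 : 3 ≤ m + 3 - (p : ℕ) := by
        simp only [Finset.mem_insert, Finset.mem_singleton, Fin.ext_iff] at hp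
        have := p.isLt
        omega
      rw [kurMap_ge3 _ _ _ hp3, smul_zero]
end
end

section
/- Let (g, d, [·,·]) be a differential graded Lie algebra over a field k of characteristic zero, η : g → g a linear map of degree −1, and μₙ the maps of Theorem 3.1. Let R be a local Artin k-algebra with maximal ideal m. Then an element Γ ∈ (g⊗m)¹ satisfies the L∞ Maurer–Cartan equation Σ_{k≥1} ((−1)^{k(k+1)/2}/k!) μₖ(Γ,…,Γ) = 0 if and only if d(Γ + ½ η[Γ,Γ]) = 0. (Equivalently, the Kuranishi map Γ ↦ Γ + ½η[Γ,Γ] identifies the Maurer–Cartan set of the L∞-algebra (g⊗m, μ_*) with the Maurer–Cartan set of the abelian differential graded Lie algebra (g⊗m, d, 0).) -/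
open Finset
open scoped TensorProduct

noncomputable section

/-- The bracket on `V ⊗[k] R` induced by a bracket on `V` and the multiplication of `R`:
`[x ⊗ a, y ⊗ b] = [x,y] ⊗ (a*b)`. -/
def tensorBracket {k : Type*} [Field k] {V : Type*} [AddCommGroup V] [Module k V]
    {R : Type*} [CommRing R] [Algebra k R] (br : V →ₗ[k] V →ₗ[k] V) :
    (V ⊗[k] R) →ₗ[k] (V ⊗[k] R) →ₗ[k] (V ⊗[k] R) :=
  TensorProduct.curry
    ((TensorProduct.map (TensorProduct.lift br) (LinearMap.mul' k R)).comp
      (TensorProduct.tensorTensorTensorComm k V R V R).toLinearMap)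

/-- The homogeneous piece `(g ⊗ m)ⁱ = gⁱ ⊗ m` of `V ⊗[k] R`: the image of `p ⊗ q` in
`V ⊗[k] R`, for a submodule `p ⊆ V` (a graded piece) and a `k`-submodule `q ⊆ R`
(the maximal ideal). -/
def tensorGrade {k : Type*} [Field k] {V : Type*} [AddCommGroup V] [Module k V]
    {R : Type*} [CommRing R] [Algebra k R] (p : Submodule k V) (q : Submodule k R) :
    Submodule k (V ⊗[k] R) :=
  LinearMap.range (TensorProduct.map p.subtype q.subtype)

/-- The maximal ideal of a local `k`-algebra, viewed as a `k`-submodule. -/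
def maxIdealSub (k : Type*) [Field k] (R : Type*) [CommRing R] [Algebra k R]
    [IsLocalRing R] : Submodule k R :=
  Submodule.restrictScalars k (IsLocalRing.maximalIdeal R)

/-- The coefficient `(-1)^{n(n+1)/2} / n!` of the `L∞` Maurer–Cartan equation. -/


def mcCoeff (k : Type*) [Field k] (n : ℕ) : k :=
  (-1 : k) ^ (n * (n + 1) / 2) / (n.factorial : k)


/-! ### Auxiliary lemmas -/

section SignLemmas

lemma aux_sign_eq_signAux {n : ℕ} (σ : Equiv.Perm (Fin n)) :
    Equiv.Perm.sign σ = Equiv.Perm.signAux σ := by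
  refine Equiv.Perm.swap_induction_on σ ?_ ?_
  · simp [Equiv.Perm.signAux_one]
  · intro f x y hxy ih
    rw [Equiv.Perm.sign_mul, Equiv.Perm.signAux_mul, ih, Equiv.Perm.sign_swap hxy,
      Equiv.Perm.signAux_swap hxy]

lemma permSign_mul_koszulSign (k : Type*) [Field k] {n : ℕ} (σ : Equiv.Perm (Fin n)) :
    permSign k σ * koszulSign k (fun _ => (1 : ℤ)) σ = 1 := by
  have hk : koszulSign k (fun _ => (1 : ℤ)) σ
      = (-1 : k) ^ (Finset.univ.filter
          (fun p : Fin n × Fin n => p.1 < p.2 ∧ σ p.2 < σ p.1)).card := by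
    rw [koszulSign]
    rw [Finset.prod_congr rfl (fun p _ => by norm_num : ∀ p ∈ _, (-1 : k) ^ ((1:ℤ) * 1) = -1)]
    rw [Finset.prod_const]
  have hp : permSign k σ = (-1 : k) ^ ((Equiv.Perm.finPairsLT n).filter
      (fun x => σ x.1 ≤ σ x.2)).card := by
    rw [permSign, aux_sign_eq_signAux, Equiv.Perm.signAux]
    push_cast
    simp only [apply_ite (fun z : ℤˣ => ((z : ℤ) : k)), Units.val_neg, Units.val_one,
      Int.cast_neg, Int.cast_one]
    rw [Finset.prod_ite, Finset.prod_const, Finset.prod_const_one, mul_one]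
  have hcard : ((Equiv.Perm.finPairsLT n).filter (fun x => σ x.1 ≤ σ x.2)).card
      = (Finset.univ.filter
          (fun p : Fin n × Fin n => p.1 < p.2 ∧ σ p.2 < σ p.1)).card := by
    refine Finset.card_bij' (fun x _ => (x.2, x.1)) (fun p _ => ⟨p.2, p.1⟩) ?_ ?_ ?_ ?_
    · intro x hx
      simp only [Finset.mem_filter] at hx ⊢
      have h2 := Equiv.Perm.mem_finPairsLT.1 hx.1
      refine ⟨Finset.mem_univ _, h2, lt_of_le_of_ne hx.2 ?_⟩
      intro h
      exact absurd (σ.injective h) (ne_of_gt h2)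
    · intro p hp
      simp only [Finset.mem_filter] at hp ⊢
      exact ⟨Equiv.Perm.mem_finPairsLT.2 hp.2.1, le_of_lt hp.2.2⟩
    · intro x _; rfl
    · intro p _; rfl
  rw [hk, hp, hcard, ← pow_add, ← two_mul, pow_mul]
  norm_num

end SignLemmas

section ShuffleLemmas

def lastShuffle {n : ℕ} (j : Fin (n+1)) : Equiv.Perm (Fin (n+1)) :=
  (finSuccEquivLast).trans (finSuccEquiv' j).symm

@[simp] lemma lastShuffle_last {n : ℕ} (j : Fin (n+1)) :
    lastShuffle j (Fin.last n) = j := by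
  simp [lastShuffle]

@[simp] lemma lastShuffle_castSucc {n : ℕ} (j : Fin (n+1)) (i : Fin n) :
    lastShuffle j i.castSucc = j.succAbove i := by
  simp [lastShuffle]

lemma lastShuffle_mem {n : ℕ} (j : Fin (n+1)) : lastShuffle j ∈ shuffles n (n+1) := by
  simp only [shuffles, mem_filter, mem_univ, true_and]
  constructor
  · intro a b hab hb
    have hb' : b ≠ Fin.last n := by
      intro h; subst h; simp at hb
    have ha' : a ≠ Fin.last n := by
      intro h; rw [h, Fin.val_last] at hab; omega
    obtain ⟨a', rfl⟩ := Fin.exists_castSucc_eq.2 ha'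
    obtain ⟨b', rfl⟩ := Fin.exists_castSucc_eq.2 hb'
    rw [lastShuffle_castSucc, lastShuffle_castSucc]
    exact Fin.strictMono_succAbove j (by exact_mod_cast hab)
  · intro a b hab ha
    have : (b : ℕ) < n + 1 := b.isLt
    omega

lemma shuffle_eq_lastShuffle {n : ℕ} {σ : Equiv.Perm (Fin (n+1))}
    (hσ : σ ∈ shuffles n (n+1)) : σ = lastShuffle (σ (Fin.last n)) := by
  simp only [shuffles, mem_filter, mem_univ, true_and] at hσ
  set j := σ (Fin.last n) with hj
  have hmono : StrictMono (fun i : Fin n => σ i.castSucc) := by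
    intro a b hab
    exact hσ.1 _ _ (by exact_mod_cast hab) b.isLt
  have hmono' : StrictMono (fun i : Fin n => (lastShuffle j) i.castSucc) := by
    intro a b hab
    simp only [lastShuffle_castSucc]
    exact Fin.strictMono_succAbove j hab
  set s : Finset (Fin (n+1)) := Finset.univ.erase j with hs
  have hcard : s.card = n := by
    simp [hs, Finset.card_erase_of_mem]
  have hm1 : ∀ i : Fin n, σ i.castSucc ∈ s := by
    intro i
    simp only [hs, Finset.mem_erase, Finset.mem_univ, and_true]
    intro h
    exact absurd (σ.injective h) (by simp [Fin.ext_iff]; omega)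
  have hm2 : ∀ i : Fin n, (lastShuffle j) i.castSucc ∈ s := by
    intro i
    simp only [lastShuffle_castSucc, hs, Finset.mem_erase, Finset.mem_univ, and_true]
    exact Fin.succAbove_ne j i
  have key : ∀ i : Fin n, σ i.castSucc = (lastShuffle j) i.castSucc := by
    intro i
    have e1 := congrFun (Finset.orderEmbOfFin_unique hcard hm1 hmono) i
    have e2 := congrFun (Finset.orderEmbOfFin_unique hcard hm2 hmono') i
    rw [e1, e2]
  ext x
  refine Fin.lastCases ?_ ?_ x
  · simp [← hj]
  · intro i; exact congrArg Fin.val (key i)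

lemma card_shuffles_last (n : ℕ) : (shuffles n (n+1)).card = n + 1 := by
  have h : (shuffles n (n+1)).card = (Finset.univ : Finset (Fin (n+1))).card := by
    refine Finset.card_bij' (fun σ _ => σ (Fin.last n)) (fun j _ => lastShuffle j) ?_ ?_ ?_ ?_
    · intro σ _; exact Finset.mem_univ _
    · intro j _; exact lastShuffle_mem j
    · intro σ hσ; exact (shuffle_eq_lastShuffle hσ).symm
    · intro j _; exact lastShuffle_last j
  rw [h, Finset.card_univ, Fintype.card_fin]

end ShuffleLemmas

section TensorLemmas

variable {k : Type*} [Field k] {V : Type*} [AddCommGroup V] [Module k V]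
    {R : Type*} [CommRing R] [Algebra k R]

lemma tensorBracket_tmul (br : V →ₗ[k] V →ₗ[k] V) (x y : V) (a b : R) :
    tensorBracket br (x ⊗ₜ[k] a) (y ⊗ₜ[k] b) = br x y ⊗ₜ[k] (a * b) := by
  simp [tensorBracket, TensorProduct.tensorTensorTensorComm_tmul, LinearMap.mul'_apply]

lemma tensorGrade_induction {p : Submodule k V} {q : Submodule k R}
    {P : V ⊗[k] R → Prop} (h0 : P 0)
    (htmul : ∀ x ∈ p, ∀ a ∈ q, P (x ⊗ₜ[k] a))
    (hadd : ∀ u v, P u → P v → P (u + v)) :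
    ∀ z ∈ tensorGrade p q, P z := by
  rintro z ⟨w, rfl⟩
  induction w using TensorProduct.induction_on with
  | zero => simpa using h0
  | tmul u a => simpa using htmul u u.2 a a.2
  | add u v hu hv => rw [map_add]; exact hadd _ _ hu hv

lemma tmul_mem_tensorGrade {p : Submodule k V} {q : Submodule k R}
    {x : V} {a : R} (hx : x ∈ p) (ha : a ∈ q) : x ⊗ₜ[k] a ∈ tensorGrade p q :=
  ⟨(⟨x, hx⟩ : p) ⊗ₜ[k] (⟨a, ha⟩ : q), by simp⟩

lemma tensorGrade_mono {p p' : Submodule k V} {q q' : Submodule k R}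
    (hp : p ≤ p') (hq : q ≤ q') : tensorGrade p q ≤ tensorGrade p' q' := by
  intro z hz
  refine tensorGrade_induction ?_ ?_ ?_ z hz
  · exact Submodule.zero_mem _
  · intro x hx a ha; exact tmul_mem_tensorGrade (hp hx) (hq ha)
  · intro u v hu hv; exact Submodule.add_mem _ hu hv

lemma rTensor_mem_tensorGrade {p p' : Submodule k V} {q : Submodule k R}
    {f : V →ₗ[k] V} (hf : ∀ x ∈ p, f x ∈ p') {z : V ⊗[k] R} (hz : z ∈ tensorGrade p q) :
    LinearMap.rTensor R f z ∈ tensorGrade p' q := by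
  refine tensorGrade_induction (P := fun z => LinearMap.rTensor R f z ∈ tensorGrade p' q)
    ?_ ?_ ?_ z hz
  · simp only [map_zero]; exact Submodule.zero_mem _
  · intro x hx a ha
    rw [LinearMap.rTensor_tmul]
    exact tmul_mem_tensorGrade (hf x hx) ha
  · intro u v hu hv; rw [map_add]; exact Submodule.add_mem _ hu hv

lemma tensorBracket_mem_tensorGrade {p p' p'' : Submodule k V} {q q' q'' : Submodule k R}
    (br : V →ₗ[k] V →ₗ[k] V)
    (hbr : ∀ x ∈ p, ∀ y ∈ p', br x y ∈ p'')
    (hq : ∀ a ∈ q, ∀ b ∈ q', a * b ∈ q'')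
    {z w : V ⊗[k] R} (hz : z ∈ tensorGrade p q) (hw : w ∈ tensorGrade p' q') :
    tensorBracket br z w ∈ tensorGrade p'' q'' := by
  refine tensorGrade_induction
    (P := fun z => tensorBracket br z w ∈ tensorGrade p'' q'') ?_ ?_ ?_ z hz
  · simp only [map_zero, LinearMap.zero_apply]; exact Submodule.zero_mem _
  · intro x hx a ha
    refine tensorGrade_induction
      (P := fun w => tensorBracket br (x ⊗ₜ[k] a) w ∈ tensorGrade p'' q'') ?_ ?_ ?_ w hw
    · simp only [map_zero]; exact Submodule.zero_mem _
    · intro y hy b hb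
      rw [tensorBracket_tmul]
      exact tmul_mem_tensorGrade (hbr x hx y hy) (hq a ha b hb)
    · intro u v hu hv; rw [map_add]; exact Submodule.add_mem _ hu hv
  · intro u v hu hv
    rw [map_add, LinearMap.add_apply]
    exact Submodule.add_mem _ hu hv

lemma tensorGrade_bot_right (p : Submodule k V) :
    tensorGrade p (⊥ : Submodule k R) = ⊥ := by
  refine le_antisymm ?_ bot_le
  intro z hz
  refine tensorGrade_induction (P := fun z => z ∈ (⊥ : Submodule k (V ⊗[k] R))) ?_ ?_ ?_ z hz
  · exact Submodule.zero_mem _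
  · intro x hx a ha
    rw [Submodule.mem_bot] at ha ⊢
    rw [ha, TensorProduct.tmul_zero]
  · intro u v hu hv; exact Submodule.add_mem _ hu hv

lemma tensorLeibniz (D : GradedDGLA k V) {i : ℤ} {q : Submodule k R}
    {x : V ⊗[k] R} (hx : x ∈ tensorGrade (D.grade i) q) (y : V ⊗[k] R) :
    LinearMap.rTensor R D.d (tensorBracket D.bracket x y)
      = tensorBracket D.bracket (LinearMap.rTensor R D.d x) y
        + (-1 : k) ^ i • tensorBracket D.bracket x (LinearMap.rTensor R D.d y) := by
  revert y
  refine tensorGrade_induction (P := fun x => ∀ y,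
    LinearMap.rTensor R D.d (tensorBracket D.bracket x y)
      = tensorBracket D.bracket (LinearMap.rTensor R D.d x) y
        + (-1 : k) ^ i • tensorBracket D.bracket x (LinearMap.rTensor R D.d y)) ?_ ?_ ?_ x hx
  · intro y; simp
  · intro u hu a ha y
    induction y using TensorProduct.induction_on with
    | zero => simp
    | tmul v b =>
      rw [tensorBracket_tmul, LinearMap.rTensor_tmul, LinearMap.rTensor_tmul,
        LinearMap.rTensor_tmul, tensorBracket_tmul, tensorBracket_tmul,
        D.leibniz i u v hu, TensorProduct.add_tmul, TensorProduct.smul_tmul']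
    | add w₁ w₂ h₁ h₂ =>
      rw [map_add, map_add, map_add, map_add, map_add, smul_add]
      rw [h₁, h₂]; abel
  · intro u v hu hv y
    simp only [map_add, LinearMap.add_apply, smul_add, hu y, hv y]
    abel

lemma tensorAntisymm (D : GradedDGLA k V) {i j : ℤ} {q q' : Submodule k R}
    {x y : V ⊗[k] R} (hx : x ∈ tensorGrade (D.grade i) q)
    (hy : y ∈ tensorGrade (D.grade j) q') :
    tensorBracket D.bracket x y = -((-1 : k) ^ (i * j) • tensorBracket D.bracket y x) := by
  refine tensorGrade_induction (P := fun x => ∀ y, y ∈ tensorGrade (D.grade j) q' →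
    tensorBracket D.bracket x y = -((-1 : k) ^ (i * j) • tensorBracket D.bracket y x))
    ?_ ?_ ?_ x hx y hy
  · intro y _; simp
  · intro u hu a ha y hy
    refine tensorGrade_induction (P := fun y =>
      tensorBracket D.bracket (u ⊗ₜ[k] a) y
        = -((-1 : k) ^ (i * j) • tensorBracket D.bracket y (u ⊗ₜ[k] a))) ?_ ?_ ?_ y hy
    · simp
    · intro v hv b hb
      rw [tensorBracket_tmul, tensorBracket_tmul, D.antisymm i j u v hu hv,
        TensorProduct.neg_tmul, TensorProduct.smul_tmul', mul_comm b a]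
    · intro w₁ w₂ h₁ h₂
      rw [map_add, map_add, LinearMap.add_apply, h₁, h₂, smul_add]; abel
  · intro u v hu hv y hy
    rw [map_add, LinearMap.add_apply, map_add, smul_add, hu y hy, hv y hy]; abel

end TensorLemmas

section MuLemmas

variable {k : Type*} [Field k] {W : Type*} [AddCommGroup W] [Module k W]

lemma muRec_const (d : W →ₗ[k] W) (br : W →ₗ[k] W →ₗ[k] W) (η : W →ₗ[k] W)
    (Γ : W) (n : ℕ) :
    muRec d br η (n+3) (fun _ => (1:ℤ)) (fun _ => Γ)
      = ((-1:k)^(n+3) * ((n+3 : ℕ) : k)) •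
          η (br (muRec d br η (n+2) (fun _ => (1:ℤ)) (fun _ => Γ)) Γ) := by
  rw [muRec]
  rw [Finset.sum_congr rfl (fun σ _ => by
    rw [permSign_mul_koszulSign, one_smul])]
  rw [Finset.sum_const, card_shuffles_last, ← Nat.cast_smul_eq_nsmul k, smul_smul]

lemma mcCoeff_succ (k : Type*) [Field k] [CharZero k] (m : ℕ) :
    mcCoeff k (m+1) * ((-1:k)^(m+1) * ((m+1 : ℕ) : k)) = mcCoeff k m := by
  have h2 : (m+1)*(m+2)/2 = m*(m+1)/2 + (m+1) := by
    have : (m+1)*(m+2) = m*(m+1) + (m+1)*2 := by ring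
    rw [this, Nat.add_mul_div_right _ _ (by norm_num : 0 < 2)]
  have hm1 : ((m+1:ℕ):k) ≠ 0 := Nat.cast_ne_zero.2 (Nat.succ_ne_zero m)
  have hf : ((m.factorial : ℕ):k) ≠ 0 := Nat.cast_ne_zero.2 m.factorial_ne_zero
  have hsq : ((-1:k)^(m+1)) * ((-1:k)^(m+1)) = 1 := by
    rw [← pow_add]; exact Even.neg_one_pow ⟨m+1, by ring⟩
  rw [mcCoeff, mcCoeff, h2, pow_add, Nat.factorial_succ, Nat.cast_mul,
      div_mul_eq_mul_div, div_eq_div_iff (mul_ne_zero hm1 hf) hf]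
  linear_combination ((-1:k)^(m*(m+1)/2) * ((m+1:ℕ):k) * ((m.factorial:ℕ):k)) * hsq

lemma mcCoeff_rec (k : Type*) [Field k] [CharZero k] (t : ℕ) :
    mcCoeff k (t+3) * ((-1:k)^(t+3) * ((t+3 : ℕ) : k)) = mcCoeff k (t+2) := by
  have h := mcCoeff_succ k (t+2)
  norm_num at h ⊢
  convert h using 2 <;> push_cast <;> ring

end MuLemmas

/-- The `m`-adic filtration `V ⊗ m^j` of `V ⊗[k] R`. -/
def filtration (k : Type*) [Field k] (V : Type*) [AddCommGroup V] [Module k V]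
    (R : Type*) [CommRing R] [Algebra k R] [IsLocalRing R] (j : ℕ) :
    Submodule k (V ⊗[k] R) :=
  tensorGrade (⊤ : Submodule k V) (Submodule.restrictScalars k (IsLocalRing.maximalIdeal R ^ j))

set_option maxHeartbeats 1200000 in
/-- Master computation: over any module with a filtration `M`, operators `d`, `η` and a
bilinear bracket `br` compatible with the filtration, if `d[Γ,Γ] = 2[dΓ,Γ]` then the `L∞`
Maurer–Cartan equation for the `μₙ` built from `(d, br, η)` is equivalent to
`d(Γ + ½η[Γ,Γ]) = 0`. -/
lemma masterMC {k : Type*} [Field k] [CharZero k] {W : Type*} [AddCommGroup W] [Module k W]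
    (d : W →ₗ[k] W) (br : W →ₗ[k] W →ₗ[k] W) (η : W →ₗ[k] W)
    (M : ℕ → Submodule k W)
    (hd : ∀ (j : ℕ) (x : W), x ∈ M j → d x ∈ M j)
    (hh : ∀ (j : ℕ) (x : W), x ∈ M j → η x ∈ M j)
    (hbr : ∀ (s t : ℕ) (x y : W), x ∈ M s → y ∈ M t → br x y ∈ M (s + t))
    (hMmono : ∀ s t : ℕ, s ≤ t → M t ≤ M s)
    (N : ℕ) (hN1 : 1 ≤ N) (hMN : M N = ⊥)
    (Γ : W) (hΓ : Γ ∈ M 1)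
    (hleib : d (br Γ Γ) = (2 : k) • br (d Γ) Γ) :
    (∑ n ∈ Finset.Icc 1 N, mcCoeff k n •
        muRec d br η n (fun _ => (1 : ℤ)) (fun _ => Γ)) = 0
      ↔ d (Γ + (1 / 2 : k) • η (br Γ Γ)) = 0 := by
  classical
  have ea1 : muRec d br η 1 (fun _ => (1:ℤ)) (fun _ => Γ) = d Γ := by
    simp only [muRec]
  have ea2 : muRec d br η 2 (fun _ => (1:ℤ)) (fun _ => Γ)
      = d (η (br Γ Γ)) + η (d (br Γ Γ)) := by
    simp only [muRec]
  have hamem : ∀ n : ℕ, muRec d br η (n + 1) (fun _ => (1:ℤ)) (fun _ => Γ) ∈ M (n + 1) := by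
    intro n
    induction n with
    | zero =>
      rw [show (0+1 : ℕ) = 1 from rfl, ea1]
      exact hd 1 Γ hΓ
    | succ n ih =>
      rcases n with _ | m
      · rw [show (0+1+1 : ℕ) = 2 from rfl, ea2]
        have hbb : br Γ Γ ∈ M 2 := hbr 1 1 Γ Γ hΓ hΓ
        exact Submodule.add_mem _ (hd 2 _ (hh 2 _ hbb)) (hh 2 _ (hd 2 _ hbb))
      · rw [show (m+1+1+1 : ℕ) = m+3 from rfl, muRec_const]
        refine Submodule.smul_mem _ _ (hh _ _ ?_)
        exact hbr (m+2) 1 _ _ ih hΓ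
  have hvanish : ∀ n : ℕ, N < n → muRec d br η n (fun _ => (1:ℤ)) (fun _ => Γ) = 0 := by
    intro n hn
    have h1 : muRec d br η n (fun _ => (1:ℤ)) (fun _ => Γ) ∈ M n := by
      obtain ⟨t, rfl⟩ : ∃ t, n = t + 1 := ⟨n - 1, by omega⟩
      exact hamem t
    have h2 := hMmono N n (le_of_lt hn) h1
    rw [hMN] at h2
    simpa using h2
  have hrec : ∀ t : ℕ, mcCoeff k (t+3) • muRec d br η (t+3) (fun _ => (1:ℤ)) (fun _ => Γ)
      = mcCoeff k (t+2) •
          η (br (muRec d br η (t+2) (fun _ => (1:ℤ)) (fun _ => Γ)) Γ) := by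
    intro t
    rw [muRec_const, smul_smul, mcCoeff_rec k t]
  set F := ∑ n ∈ Finset.Icc 1 N, mcCoeff k n •
    muRec d br η n (fun _ => (1:ℤ)) (fun _ => Γ) with hF_def
  have hsum_ext : ∀ L' : ℕ, N ≤ L' → (∑ n ∈ Finset.Icc 1 L', mcCoeff k n •
      muRec d br η n (fun _ => (1:ℤ)) (fun _ => Γ)) = F := by
    intro L' hL'
    rw [hF_def]
    symm
    refine Finset.sum_subset (Finset.Icc_subset_Icc le_rfl hL') ?_
    intro x hx hnx
    simp only [Finset.mem_Icc] at hx hnx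
    rw [hvanish x (by omega), smul_zero]
  have hIccIoc : ∀ m : ℕ, Finset.Icc 1 m = Finset.Ioc 0 m := by
    intro m; ext x; simp only [Finset.mem_Icc, Finset.mem_Ioc]; omega
  set T : W →ₗ[k] W := η ∘ₗ (br.flip Γ) with hT_def
  have hT : ∀ x : W, T x = η (br x Γ) := fun x => rfl
  have key : F = -(d (Γ + (1 / 2 : k) • η (br Γ Γ))) + T F := by
    have e1 : (∑ n ∈ Finset.Ioc 0 (N+3), mcCoeff k n •
        muRec d br η n (fun _ => (1:ℤ)) (fun _ => Γ)) = F := by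
      rw [← hIccIoc]; exact hsum_ext (N+3) (by omega)
    have e2 : ((∑ n ∈ Finset.Ioc 0 2, mcCoeff k n •
          muRec d br η n (fun _ => (1:ℤ)) (fun _ => Γ))
        + ∑ n ∈ Finset.Ioc 2 (N+3), mcCoeff k n •
          muRec d br η n (fun _ => (1:ℤ)) (fun _ => Γ))
        = ∑ n ∈ Finset.Ioc 0 (N+3), mcCoeff k n •
          muRec d br η n (fun _ => (1:ℤ)) (fun _ => Γ) :=
      Finset.sum_Ioc_consecutive _ (by omega) (by omega)
    have e3 : (∑ n ∈ Finset.Ioc 0 2, mcCoeff k n •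
          muRec d br η n (fun _ => (1:ℤ)) (fun _ => Γ))
        = mcCoeff k 1 • muRec d br η 1 (fun _ => (1:ℤ)) (fun _ => Γ)
          + mcCoeff k 2 • muRec d br η 2 (fun _ => (1:ℤ)) (fun _ => Γ) := by
      rw [show Finset.Ioc 0 2 = {1, 2} from by decide]
      rw [Finset.sum_insert (by decide), Finset.sum_singleton]
    have e4 : (∑ n ∈ Finset.Ioc 2 (N+3), mcCoeff k n •
          muRec d br η n (fun _ => (1:ℤ)) (fun _ => Γ))
        = ∑ m ∈ Finset.Ioc 1 (N+2), mcCoeff k m •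
            T (muRec d br η m (fun _ => (1:ℤ)) (fun _ => Γ)) := by
      have hmap : Finset.Ioc 2 (N+3)
          = Finset.map (addRightEmbedding 1) (Finset.Ioc 1 (N+2)) := by
        rw [Finset.map_add_right_Ioc]
      rw [hmap, Finset.sum_map]
      refine Finset.sum_congr rfl ?_
      intro m hm
      simp only [Finset.mem_Ioc] at hm
      obtain ⟨t, rfl⟩ : ∃ t, m = t + 2 := ⟨m - 2, by omega⟩
      show mcCoeff k (t+2+1) • muRec d br η (t+2+1) (fun _ => (1:ℤ)) (fun _ => Γ)
        = mcCoeff k (t+2) • T (muRec d br η (t+2) (fun _ => (1:ℤ)) (fun _ => Γ))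
      rw [hT]
      exact hrec t
    have e5 : (mcCoeff k 1 • T (muRec d br η 1 (fun _ => (1:ℤ)) (fun _ => Γ))
        + ∑ m ∈ Finset.Ioc 1 (N+2), mcCoeff k m •
            T (muRec d br η m (fun _ => (1:ℤ)) (fun _ => Γ)))
        = ∑ m ∈ Finset.Ioc 0 (N+2), mcCoeff k m •
            T (muRec d br η m (fun _ => (1:ℤ)) (fun _ => Γ)) := by
      have h := Finset.sum_Ioc_consecutive (fun m => mcCoeff k m •
        T (muRec d br η m (fun _ => (1:ℤ)) (fun _ => Γ)))
        (show (0:ℕ) ≤ 1 by omega) (show 1 ≤ N+2 by omega)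
      rw [← h]
      congr 1
      rw [show Finset.Ioc 0 1 = {1} from by decide, Finset.sum_singleton]
    have e6 : (∑ m ∈ Finset.Ioc 0 (N+2), mcCoeff k m •
          T (muRec d br η m (fun _ => (1:ℤ)) (fun _ => Γ))) = T F := by
      calc ∑ m ∈ Finset.Ioc 0 (N+2), mcCoeff k m •
            T (muRec d br η m (fun _ => (1:ℤ)) (fun _ => Γ))
          = ∑ m ∈ Finset.Ioc 0 (N+2),
              T (mcCoeff k m • muRec d br η m (fun _ => (1:ℤ)) (fun _ => Γ)) := by
            refine Finset.sum_congr rfl fun m _ => (map_smul T _ _).symm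
        _ = T (∑ m ∈ Finset.Ioc 0 (N+2), mcCoeff k m •
              muRec d br η m (fun _ => (1:ℤ)) (fun _ => Γ)) := (map_sum T _ _).symm
        _ = T F := by rw [← hIccIoc, hsum_ext (N+2) (by omega)]
    have hc1 : mcCoeff k 1 = -1 := by norm_num [mcCoeff]
    have hc2 : mcCoeff k 2 = -(1/2 : k) := by norm_num [mcCoeff]
    have e7 : mcCoeff k 1 • muRec d br η 1 (fun _ => (1:ℤ)) (fun _ => Γ)
          + mcCoeff k 2 • muRec d br η 2 (fun _ => (1:ℤ)) (fun _ => Γ)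
        = -(d (Γ + (1 / 2 : k) • η (br Γ Γ)))
          + mcCoeff k 1 • T (muRec d br η 1 (fun _ => (1:ℤ)) (fun _ => Γ)) := by
      rw [ea1, ea2, hc1, hc2, hT, map_add, map_smul, hleib, map_smul]
      module
    calc F = (mcCoeff k 1 • muRec d br η 1 (fun _ => (1:ℤ)) (fun _ => Γ)
          + mcCoeff k 2 • muRec d br η 2 (fun _ => (1:ℤ)) (fun _ => Γ))
          + ∑ n ∈ Finset.Ioc 2 (N+3), mcCoeff k n •
              muRec d br η n (fun _ => (1:ℤ)) (fun _ => Γ) := by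
          rw [← e1, ← e2, e3]
      _ = (-(d (Γ + (1 / 2 : k) • η (br Γ Γ)))
            + mcCoeff k 1 • T (muRec d br η 1 (fun _ => (1:ℤ)) (fun _ => Γ)))
          + ∑ m ∈ Finset.Ioc 1 (N+2), mcCoeff k m •
              T (muRec d br η m (fun _ => (1:ℤ)) (fun _ => Γ)) := by
          rw [e7, e4]
      _ = -(d (Γ + (1 / 2 : k) • η (br Γ Γ)))
          + (mcCoeff k 1 • T (muRec d br η 1 (fun _ => (1:ℤ)) (fun _ => Γ))
            + ∑ m ∈ Finset.Ioc 1 (N+2), mcCoeff k m •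
                T (muRec d br η m (fun _ => (1:ℤ)) (fun _ => Γ))) := by abel
      _ = -(d (Γ + (1 / 2 : k) • η (br Γ Γ))) + T F := by rw [e5, e6]
  constructor
  · intro h
    rw [h, map_zero, add_zero] at key
    exact neg_eq_zero.1 key.symm
  · intro h
    have hTF : F = T F := by
      conv_lhs => rw [key]
      rw [h, neg_zero, zero_add]
    have hFmem : ∀ j : ℕ, F ∈ M (j+1) := by
      intro j
      induction j with
      | zero =>
        rw [hF_def]
        refine Submodule.sum_mem _ ?_
        intro n hn
        simp only [Finset.mem_Icc] at hn
        obtain ⟨t, rfl⟩ : ∃ t, n = t + 1 := ⟨n - 1, by omega⟩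
        exact Submodule.smul_mem _ _ (hMmono 1 (t+1) (by omega) (hamem t))
      | succ j ih =>
        rw [hTF, hT]
        exact hh _ _ (hbr (j+1) 1 _ _ ih hΓ)
    have hFN : F ∈ M N := by
      obtain ⟨t, rfl⟩ : ∃ t, N = t + 1 := ⟨N - 1, by omega⟩
      exact hFmem t
    rw [hMN] at hFN
    simpa using hFN

theorem statement2 {k V : Type*} [Field k] [CharZero k] [AddCommGroup V] [Module k V]
    (D : GradedDGLA k V) (η : V →ₗ[k] V)
    (hη : ∀ (i : ℤ) (v : V), v ∈ D.grade i → η v ∈ D.grade (i - 1))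
    (R : Type*) [CommRing R] [Algebra k R] [IsLocalRing R] [IsArtinianRing R]
    (N : ℕ) (hN : IsLocalRing.maximalIdeal R ^ N = ⊥)
    (Γ : V ⊗[k] R) (hΓ : Γ ∈ tensorGrade (D.grade 1) (maxIdealSub k R)) :
    (∑ n ∈ Finset.Icc 1 N, mcCoeff k n •
        muRec (LinearMap.rTensor R D.d) (tensorBracket D.bracket) (LinearMap.rTensor R η)
          n (fun _ => (1 : ℤ)) (fun _ => Γ)) = 0
      ↔ (LinearMap.rTensor R D.d)
          (Γ + (1 / 2 : k) •
            (LinearMap.rTensor R η) (tensorBracket D.bracket Γ Γ)) = 0 := by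
  have hN1 : 1 ≤ N := by
    by_contra hc'
    push_neg at hc'
    interval_cases N
    rw [pow_zero, Ideal.one_eq_top] at hN
    exact one_ne_zero ((Submodule.mem_bot R).1 (hN ▸ Submodule.mem_top : (1:R) ∈ (⊥ : Ideal R)))
  have hΓ1 : Γ ∈ filtration k V R 1 := by
    refine tensorGrade_mono le_top ?_ hΓ
    intro x hx
    rw [Submodule.restrictScalars_mem, pow_one]
    exact hx
  have hdΓ : LinearMap.rTensor R D.d Γ ∈ tensorGrade (D.grade 2) (maxIdealSub k R) := by
    refine rTensor_mem_tensorGrade ?_ hΓ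
    intro x hx
    have h := D.d_grade 1 x hx
    norm_num at h
    exact h
  have hleib : LinearMap.rTensor R D.d (tensorBracket D.bracket Γ Γ)
      = (2 : k) • tensorBracket D.bracket (LinearMap.rTensor R D.d Γ) Γ := by
    have h1 := tensorLeibniz D hΓ Γ
    have h2 := tensorAntisymm D hΓ hdΓ
    rw [h2] at h1
    rw [h1]
    norm_num
    rw [two_smul]
  refine masterMC (LinearMap.rTensor R D.d) (tensorBracket D.bracket) (LinearMap.rTensor R η)
    (filtration k V R) ?_ ?_ ?_ ?_ N hN1 ?_ Γ hΓ1 hleib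
  · intro j x hx
    exact rTensor_mem_tensorGrade (fun y _ => Submodule.mem_top) hx
  · intro j x hx
    exact rTensor_mem_tensorGrade (fun y _ => Submodule.mem_top) hx
  · intro s t x y hx hy
    refine tensorBracket_mem_tensorGrade _ (fun u _ v _ => Submodule.mem_top) ?_ hx hy
    intro p hp q hq
    rw [Submodule.restrictScalars_mem] at hp hq ⊢
    rw [pow_add]
    exact Submodule.mul_mem_mul hp hq
  · intro s t hst
    refine tensorGrade_mono le_rfl ?_
    intro x hx
    rw [Submodule.restrictScalars_mem] at hx ⊢
    exact Ideal.pow_le_pow_right hst hx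
  · show tensorGrade _ _ = ⊥
    rw [hN, Submodule.restrictScalars_bot, tensorGrade_bot_right]
end
end

section
/- Let (g, d, [·,·]) be a differential graded Lie algebra over a field k of characteristic zero, η : g → g a linear map of degree −1, and μₙ the maps of Theorem 3.1. Then each μₙ is graded antisymmetric, i.e. for all homogeneous v₁,…,vₙ and each 1 ≤ i < n, μₙ(v₁,…,vᵢ,v_{i+1},…,vₙ) = −(−1)^{ṽᵢ ṽ_{i+1}} μₙ(v₁,…,v_{i+1},vᵢ,…,vₙ), and each μₙ has degree 2−n, i.e. μₙ(v₁,…,vₙ) ∈ g^{i₁+…+iₙ+2−n} whenever vⱼ ∈ g^{iⱼ}. Hence μₙ descends to a map Λⁿg → g[2−n]. -/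
open Finset
open scoped TensorProduct

noncomputable section

namespace Stmt14Aux

open Finset Equiv

lemma succAbove_val {N : ℕ} (m : Fin (N+1)) (i : Fin N) :
    ((m.succAbove i : Fin (N+1)) : ℕ) = if (i:ℕ) < (m:ℕ) then (i:ℕ) else (i:ℕ)+1 := by
  rcases lt_or_ge (Fin.castSucc i) m with h | h
  · have h' : (i:ℕ) < (m:ℕ) := by simpa [Fin.lt_def] using h
    rw [Fin.succAbove_of_castSucc_lt _ _ h, Fin.coe_castSucc, if_pos h']
  · have h' : (m:ℕ) ≤ (i:ℕ) := by simpa [Fin.le_def] using h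
    rw [Fin.succAbove_of_le_castSucc _ _ h, Fin.val_succ, if_neg (by omega)]

lemma swap_val {N : ℕ} (a b x : Fin N) :
    ((Equiv.swap a b x : Fin N) : ℕ) =
      if x = a then (b:ℕ) else if x = b then (a:ℕ) else (x:ℕ) := by
  rcases eq_or_ne x a with rfl | hxa
  · rw [Equiv.swap_apply_left, if_pos rfl]
  · rcases eq_or_ne x b with rfl | hxb
    · rw [Equiv.swap_apply_right, if_neg hxa, if_pos rfl]
    · rw [Equiv.swap_apply_of_ne_of_ne hxa hxb, if_neg hxa, if_neg hxb]

def sigmaM {N : ℕ} (m : Fin (N+1)) : Equiv.Perm (Fin (N+1)) :=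
  (finSuccEquiv' (Fin.last N)).trans (finSuccEquiv' m).symm

@[simp] lemma sigmaM_last {N : ℕ} (m : Fin (N+1)) : sigmaM m (Fin.last N) = m := by
  simp [sigmaM]

@[simp] lemma sigmaM_castSucc {N : ℕ} (m : Fin (N+1)) (i : Fin N) :
    sigmaM m (Fin.castSucc i) = m.succAbove i := by
  show (finSuccEquiv' m).symm (finSuccEquiv' (Fin.last N) (Fin.castSucc i)) = _
  rw [finSuccEquiv'_last_apply_castSucc, finSuccEquiv'_symm_some]

lemma sigmaM_mem {N : ℕ} (m : Fin (N+1)) : sigmaM m ∈ shuffles N (N+1) := by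
  rw [shuffles, Finset.mem_filter]
  refine ⟨Finset.mem_univ _, ?_, ?_⟩
  · intro a b hab hb
    have hb' : (b:ℕ) < N := hb
    have ha' : (a:ℕ) < N := lt_trans hab hb'
    have ea : a = Fin.castSucc ⟨(a:ℕ), ha'⟩ := by ext; simp
    have eb : b = Fin.castSucc ⟨(b:ℕ), hb'⟩ := by ext; simp
    rw [ea, eb, sigmaM_castSucc, sigmaM_castSucc, Fin.lt_def,
      succAbove_val, succAbove_val]
    simp only [Fin.val_mk]
    split <;> split <;> omega
  · intro a b hab ha
    have : (b:ℕ) ≤ N := Fin.le_last b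
    omega

lemma shuffle_eq {N : ℕ} (σ : Equiv.Perm (Fin (N+1))) (hσ : σ ∈ shuffles N (N+1)) :
    σ = sigmaM (σ (Fin.last N)) := by
  rw [shuffles, Finset.mem_filter] at hσ
  obtain ⟨-, h1, -⟩ := hσ
  set m := σ (Fin.last N) with hm
  have key : (fun i : Fin N => σ (Fin.castSucc i)) = m.succAbove := by
    refine (StrictMono.range_inj ?_ ?_).mp ?_
    · intro i j hij
      exact h1 _ _ (by simpa using (Fin.lt_def.mp hij)) (by simpa using j.isLt)
    · exact Fin.strictMono_succAbove m
    · rw [Fin.range_succAbove]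
      ext x
      simp only [Set.mem_range, Set.mem_compl_iff, Set.mem_singleton_iff]
      constructor
      · rintro ⟨i, rfl⟩ h
        have := σ.injective h
        have hi := i.isLt
        rw [Fin.ext_iff] at this
        simp at this
        omega
      · intro hx
        obtain ⟨y, rfl⟩ := σ.surjective x
        rcases Fin.eq_castSucc_or_eq_last y with ⟨i, rfl⟩ | rfl
        · exact ⟨i, rfl⟩
        · exact absurd rfl hx
  ext x
  rcases Fin.eq_castSucc_or_eq_last x with ⟨i, rfl⟩ | rfl
  · rw [sigmaM_castSucc, ← key]
  · rw [sigmaM_last]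

end Stmt14Aux
namespace Stmt14Aux

lemma sigmaM_val {N : ℕ} (m : Fin (N+1)) (x : Fin (N+1)) :
    ((sigmaM m x : Fin (N+1)) : ℕ) =
      if (x:ℕ) = N then (m:ℕ) else if (x:ℕ) < (m:ℕ) then (x:ℕ) else (x:ℕ)+1 := by
  rcases Fin.eq_castSucc_or_eq_last x with ⟨i, rfl⟩ | rfl
  · have hi : (i:ℕ) < N := i.isLt
    rw [sigmaM_castSucc, succAbove_val, Fin.coe_castSucc]
    split_ifs <;> omega
  · rw [sigmaM_last, Fin.val_last, if_pos rfl]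

lemma swap_val' {N : ℕ} (a b x : Fin N) :
    ((Equiv.swap a b x : Fin N) : ℕ) =
      if (x:ℕ) = (a:ℕ) then (b:ℕ) else if (x:ℕ) = (b:ℕ) then (a:ℕ) else (x:ℕ) := by
  rw [swap_val]
  simp only [Fin.ext_iff]

lemma sigmaM_last_eq_one {N : ℕ} : sigmaM (Fin.last N) = 1 := by
  apply Equiv.ext; intro x
  apply Fin.ext
  rw [sigmaM_val, Fin.val_last, Equiv.Perm.coe_one, id_eq]
  have := x.isLt
  split_ifs <;> omega

lemma sign_sigmaM {N : ℕ} (m : Fin (N+1)) :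
    Equiv.Perm.sign (sigmaM m) = (-1) ^ (N - (m:ℕ)) := by
  suffices h : ∀ r (m : Fin (N+1)), (m:ℕ) + r = N →
      Equiv.Perm.sign (sigmaM m) = (-1) ^ r by
    have hm : (m:ℕ) + (N - (m:ℕ)) = N := by have := m.isLt; omega
    exact h _ m hm
  intro r
  induction r with
  | zero =>
    intro m hm
    have : m = Fin.last N := Fin.ext (by simpa using hm)
    rw [this, sigmaM_last_eq_one]
    simp
  | succ r ih =>
    intro m hm
    set m' : Fin (N+1) := ⟨(m:ℕ)+1, by omega⟩ with hm'
    have hmm' : m ≠ m' := by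
      simp only [ne_eq, Fin.ext_iff, hm']
      omega
    have key : sigmaM m = Equiv.swap m m' * sigmaM m' := by
      apply Equiv.ext; intro x
      apply Fin.ext
      rw [Equiv.Perm.mul_apply, swap_val', sigmaM_val, sigmaM_val]
      have hx := x.isLt
      have h1 : (m':ℕ) = (m:ℕ)+1 := rfl
      split_ifs <;> omega
    rw [key, Equiv.Perm.sign_mul, Equiv.Perm.sign_swap hmm',
      ih m' (by simp [hm']; omega)]
    rw [pow_succ, mul_comm]

lemma zpow_sum_aux {k : Type*} [Field k] {ι : Type*} (s : Finset ι) (f : ι → ℤ) :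
    (-1 : k) ^ (∑ i ∈ s, f i) = ∏ i ∈ s, (-1 : k) ^ (f i) := by
  classical
  induction s using Finset.cons_induction with
  | empty => simp
  | cons a s ha ih =>
    rw [Finset.sum_cons, Finset.prod_cons, zpow_add₀ (by norm_num : (-1:k) ≠ 0), ih]

lemma perm_sign_sigmaM {k : Type*} [Field k] {N : ℕ} (m : Fin (N+1)) :
    permSign k (sigmaM m) = (-1 : k) ^ (N - (m:ℕ)) := by
  rw [permSign, sign_sigmaM]
  push_cast
  rfl

lemma koszul_sigmaM {k : Type*} [Field k] {N : ℕ} (deg : Fin (N+1) → ℤ) (m : Fin (N+1)) :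
    koszulSign k deg (sigmaM m) =
      (-1 : k) ^ (deg m * ∑ j ∈ Finset.univ.filter (fun j => m < j), deg j) := by
  classical
  have memP : ∀ p : Fin (N+1) × Fin (N+1),
      (p.1 < p.2 ∧ sigmaM m p.2 < sigmaM m p.1) ↔
      (p.2 = Fin.last N ∧ (m:ℕ) ≤ (p.1:ℕ) ∧ (p.1:ℕ) < N) := by
    intro p
    have h1 := sigmaM_val m p.1
    have h2 := sigmaM_val m p.2
    have hp1 := p.1.isLt
    have hp2 := p.2.isLt
    rw [Fin.lt_def, Fin.lt_def, Fin.ext_iff, Fin.val_last]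
    constructor
    · rintro ⟨ha, hb⟩
      rw [h1, h2] at hb
      split_ifs at hb <;> omega
    · rintro ⟨ha, hb, hc⟩
      rw [h1, h2]
      constructor
      · omega
      · split_ifs <;> omega
  rw [koszulSign]
  rw [show (Finset.univ.filter
        (fun p : Fin (N+1) × Fin (N+1) => p.1 < p.2 ∧ sigmaM m p.2 < sigmaM m p.1)) =
      Finset.univ.filter (fun p : Fin (N+1) × Fin (N+1) =>
        p.2 = Fin.last N ∧ (m:ℕ) ≤ (p.1:ℕ) ∧ (p.1:ℕ) < N) from
    Finset.filter_congr (fun p _ => by rw [memP p])]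
  have step1 : (∏ p ∈ Finset.univ.filter (fun p : Fin (N+1) × Fin (N+1) =>
        p.2 = Fin.last N ∧ (m:ℕ) ≤ (p.1:ℕ) ∧ (p.1:ℕ) < N),
      (-1 : k) ^ (deg (sigmaM m p.1) * deg (sigmaM m p.2)))
      = ∏ x ∈ Finset.univ.filter (fun x : Fin (N+1) => (m:ℕ) ≤ (x:ℕ) ∧ (x:ℕ) < N),
          (-1 : k) ^ (deg (sigmaM m x) * deg m) := by
    apply Finset.prod_nbij' (fun p => p.1) (fun x => (x, Fin.last N))
    · intro p hp
      rw [Finset.mem_filter] at hp ⊢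
      exact ⟨Finset.mem_univ _, hp.2.2⟩
    · intro x hx
      rw [Finset.mem_filter] at hx ⊢
      exact ⟨Finset.mem_univ _, rfl, hx.2⟩
    · intro p hp
      rw [Finset.mem_filter] at hp
      rw [← hp.2.1]
    · intro x _
      rfl
    · intro p hp
      rw [Finset.mem_filter] at hp
      rw [hp.2.1, sigmaM_last]
  rw [step1]
  have step2 : ∑ x ∈ Finset.univ.filter (fun x : Fin (N+1) => (m:ℕ) ≤ (x:ℕ) ∧ (x:ℕ) < N),
      deg (sigmaM m x) = ∑ j ∈ Finset.univ.filter (fun j => m < j), deg j := by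
    apply Finset.sum_nbij' (fun x => sigmaM m x)
      (fun j => (⟨(j:ℕ)-1, by have := j.isLt; omega⟩ : Fin (N+1)))
    · intro x hx
      rw [Finset.mem_filter] at hx ⊢
      refine ⟨Finset.mem_univ _, ?_⟩
      rw [Fin.lt_def, sigmaM_val]
      have := hx.2
      split_ifs <;> omega
    · intro j hj
      rw [Finset.mem_filter] at hj ⊢
      have hj2 := hj.2
      rw [Fin.lt_def] at hj2
      have := j.isLt
      exact ⟨Finset.mem_univ _, by simp; omega, by simp; omega⟩
    · intro x hx
      rw [Finset.mem_filter] at hx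
      apply Fin.ext
      simp only [sigmaM_val]
      have := hx.2
      split_ifs <;> omega
    · intro j hj
      rw [Finset.mem_filter] at hj
      have hj2 := hj.2
      rw [Fin.lt_def] at hj2
      have := j.isLt
      apply Fin.ext
      rw [sigmaM_val]
      simp only [Fin.val_mk]
      split_ifs <;> omega
    · intro x _
      rfl
  rw [← step2, Finset.mul_sum, zpow_sum_aux]
  apply Finset.prod_congr rfl
  intro x _
  rw [mul_comm]

end Stmt14Aux
namespace Stmt14Aux

def tail {n : ℕ} (deg : Fin n → ℤ) (m : Fin n) : ℤ :=
  ∑ j ∈ Finset.univ.filter (fun j => m < j), deg j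

lemma mu_closed {k W : Type*} [Field k] [AddCommGroup W] [Module k W]
    (d : W →ₗ[k] W) (br : W →ₗ[k] W →ₗ[k] W) (η : W →ₗ[k] W)
    (n : ℕ) (deg : Fin (n+3) → ℤ) (v : Fin (n+3) → W) :
    muRec d br η (n+3) deg v
      = (-1 : k) ^ (n+3) • ∑ m : Fin (n+3),
          (((-1 : k) ^ (n+2 - (m:ℕ)) * (-1 : k) ^ (deg m * tail deg m)) •
            η (br
                (muRec d br η (n+2) (fun i => deg (m.succAbove i))
                  (fun i => v (m.succAbove i)))
                (v m))) := by
  rw [muRec]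
  congr 1
  apply Finset.sum_nbij' (fun σ => σ (Fin.last (n+2))) (fun m => sigmaM m)
  · intro σ _; exact Finset.mem_univ _
  · intro m _; exact sigmaM_mem m
  · intro σ hσ; exact (shuffle_eq σ hσ).symm
  · intro m _; exact sigmaM_last m
  · intro σ hσ
    set m := σ (Fin.last (n+2)) with hm
    have hs := shuffle_eq σ hσ
    rw [hs]
    simp only [sigmaM_castSucc, sigmaM_last, perm_sign_sigmaM, koszul_sigmaM, tail]
    rfl

end Stmt14Aux
namespace Stmt14Aux

variable {k V : Type*} [Field k] [AddCommGroup V] [Module k V]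

lemma mu_mem (D : GradedDGLA k V) (η : V →ₗ[k] V)
    (hη : ∀ (i : ℤ) (v : V), v ∈ D.grade i → η v ∈ D.grade (i - 1)) :
    ∀ (N : ℕ) (deg : Fin N → ℤ) (v : Fin N → V), (∀ j, v j ∈ D.grade (deg j)) →
      muRec D.d D.bracket η N deg v ∈ D.grade ((∑ j, deg j) + 2 - (N:ℤ)) := by
  intro N
  induction N using Nat.strong_induction_on with
  | _ N ih =>
  match N with
  | 0 =>
    intro deg v hv
    rw [muRec]
    exact Submodule.zero_mem _
  | 1 =>
    intro deg v hv
    rw [muRec]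
    have h := D.d_grade _ _ (hv 0)
    have e : (∑ j, deg j) + 2 - ((1:ℕ):ℤ) = deg 0 + 1 := by
      rw [Fin.sum_univ_one]; push_cast; ring
    rw [e]
    exact h
  | 2 =>
    intro deg v hv
    rw [muRec]
    have hbr := D.bracket_grade _ _ _ _ (hv 0) (hv 1)
    have e : (∑ j, deg j) + 2 - ((2:ℕ):ℤ) = deg 0 + deg 1 := by
      rw [Fin.sum_univ_two]; push_cast; ring
    rw [e]
    apply Submodule.add_mem
    · have h1 := D.d_grade _ _ (hη _ _ hbr)
      rwa [show deg 0 + deg 1 - 1 + 1 = deg 0 + deg 1 by ring] at h1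
    · have h1 := hη _ _ (D.d_grade _ _ hbr)
      rwa [show deg 0 + deg 1 + 1 - 1 = deg 0 + deg 1 by ring] at h1
  | (n+3) =>
    intro deg v hv
    rw [mu_closed]
    apply Submodule.smul_mem
    apply Submodule.sum_mem
    intro m _
    apply Submodule.smul_mem
    have h1 := ih (n+2) (by omega) (fun i => deg (m.succAbove i))
      (fun i => v (m.succAbove i)) (fun j => hv _)
    have hbr := D.bracket_grade _ _ _ _ h1 (hv m)
    have h2 := hη _ _ hbr
    have e : (∑ j, deg j) + 2 - ((n+3:ℕ):ℤ)
        = (∑ i, deg (m.succAbove i)) + 2 - ((n+2:ℕ):ℤ) + deg m - 1 := by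
      rw [Fin.sum_univ_succAbove deg m]; push_cast; ring
    rw [e]
    exact h2

end Stmt14Aux
namespace Stmt14Aux

section Eps
variable {k : Type*} [Field k]

lemma eps_add (x y : ℤ) : (-1:k)^(x+y) = (-1:k)^x * (-1:k)^y :=
  zpow_add₀ (by norm_num) x y

lemma eps_mul_self (x : ℤ) : (-1:k)^x * (-1:k)^x = 1 := by
  rw [← mul_zpow]; norm_num

end Eps

lemma filter_gt_insert {N : ℕ} (a b : Fin N) (hab : (a:ℕ)+1 = (b:ℕ)) :
    Finset.univ.filter (fun j => a < j) = insert b (Finset.univ.filter (fun j => b < j)) := by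
  ext j
  simp only [Finset.mem_filter, Finset.mem_insert, Finset.mem_univ, true_and, Fin.lt_def,
    Fin.ext_iff]
  omega

lemma tail_insert {N : ℕ} (deg : Fin N → ℤ) (a b : Fin N) (hab : (a:ℕ)+1 = (b:ℕ)) :
    tail deg a = deg b + tail deg b := by
  rw [tail, tail, filter_gt_insert a b hab, Finset.sum_insert (by simp only [Finset.mem_filter, Finset.mem_univ, true_and]; exact lt_irrefl b)]

lemma tail_swap_gt {N : ℕ} (deg : Fin N → ℤ) (a b m : Fin N) (hab : (a:ℕ)+1 = (b:ℕ))
    (hm : (b:ℕ) ≤ (m:ℕ)) : tail (deg ∘ Equiv.swap a b) m = tail deg m := by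
  apply Finset.sum_congr rfl
  intro j hj
  rw [Finset.mem_filter, Fin.lt_def] at hj
  have hja : j ≠ a := by simp only [ne_eq, Fin.ext_iff]; omega
  have hjb : j ≠ b := by simp only [ne_eq, Fin.ext_iff]; omega
  simp [Equiv.swap_apply_of_ne_of_ne hja hjb]

lemma tail_swap_lt {N : ℕ} (deg : Fin N → ℤ) (a b m : Fin N) (hab : (a:ℕ)+1 = (b:ℕ))
    (hm : (m:ℕ) < (a:ℕ)) : tail (deg ∘ Equiv.swap a b) m = tail deg m := by
  rw [tail, tail]
  apply Finset.sum_nbij' (fun j => Equiv.swap a b j) (fun j => Equiv.swap a b j)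
  · intro j hj
    rw [Finset.mem_filter, Fin.lt_def] at hj ⊢
    refine ⟨Finset.mem_univ _, ?_⟩
    rw [swap_val']
    have := hj.2
    split_ifs <;> omega
  · intro j hj
    rw [Finset.mem_filter, Fin.lt_def] at hj ⊢
    refine ⟨Finset.mem_univ _, ?_⟩
    rw [swap_val']
    have := hj.2
    split_ifs <;> omega
  · intro j _; exact Equiv.swap_apply_self a b j
  · intro j _; exact Equiv.swap_apply_self a b j
  · intro j _; rfl

end Stmt14Aux
namespace Stmt14Aux

lemma swap_succAbove_right {N : ℕ} (a b : Fin (N+1)) (hab : (a:ℕ)+1 = (b:ℕ)) (i : Fin N) :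
    Equiv.swap a b (b.succAbove i) = a.succAbove i := by
  apply Fin.ext
  rw [swap_val', succAbove_val, succAbove_val]
  have hi := i.isLt
  have hb := b.isLt
  split_ifs <;> omega

lemma swap_succAbove_left {N : ℕ} (a b : Fin (N+1)) (hab : (a:ℕ)+1 = (b:ℕ)) (i : Fin N) :
    Equiv.swap a b (a.succAbove i) = b.succAbove i := by
  apply Fin.ext
  rw [swap_val', succAbove_val, succAbove_val]
  have hi := i.isLt
  have hb := b.isLt
  split_ifs <;> omega

lemma swap_succAbove_mid {N : ℕ} (a b m : Fin (N+1)) (hab : (a:ℕ)+1 = (b:ℕ))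
    (hma : m ≠ a) (hmb : m ≠ b) :
    ∃ a' b' : Fin N, (a':ℕ)+1 = (b':ℕ) ∧ m.succAbove a' = a ∧ m.succAbove b' = b ∧
      ∀ i, Equiv.swap a b (m.succAbove i) = m.succAbove (Equiv.swap a' b' i) := by
  have hb := b.isLt
  have hm := m.isLt
  have hma' : (m:ℕ) ≠ (a:ℕ) := fun h => hma (Fin.ext h)
  have hmb' : (m:ℕ) ≠ (b:ℕ) := fun h => hmb (Fin.ext h)
  refine ⟨⟨if (a:ℕ) < (m:ℕ) then (a:ℕ) else (a:ℕ)-1, by split_ifs <;> omega⟩,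
    ⟨(if (a:ℕ) < (m:ℕ) then (a:ℕ) else (a:ℕ)-1)+1, by split_ifs <;> omega⟩, rfl, ?_, ?_, ?_⟩
  · apply Fin.ext
    rw [succAbove_val]
    simp only [Fin.val_mk]
    split_ifs <;> omega
  · apply Fin.ext
    rw [succAbove_val]
    simp only [Fin.val_mk]
    split_ifs <;> omega
  · intro i
    apply Fin.ext
    rw [swap_val', succAbove_val, succAbove_val, swap_val']
    simp only [Fin.val_mk]
    have hi := i.isLt
    split_ifs <;> omega

end Stmt14Aux
namespace Stmt14Aux

variable {k V : Type*} [Field k] [AddCommGroup V] [Module k V]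

lemma smul_neg_comm_helper (s t : k) (x : V) : -(s • (t • x)) = t • (-(s • x)) := by
  rw [smul_comm, smul_neg]

lemma smul_eq_neg_helper (c c' s : k) (x : V) (h : c = -(s * c')) :
    c • x = -(s • (c' • x)) := by
  rw [smul_smul, ← neg_smul, h]

lemma neg_smul_helper (s c : k) (hs : s * s = 1) (x y : V) (hxy : y = -(s • x)) :
    c • x = -(s • (c • y)) := by
  rw [hxy, smul_neg, smul_neg, neg_neg, smul_smul, smul_smul,
    show s * c * s = c * (s * s) from by ring, hs, mul_one]

lemma mu_swap (D : GradedDGLA k V) (η : V →ₗ[k] V) :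
    ∀ (N : ℕ) (deg : Fin N → ℤ) (v : Fin N → V), (∀ j, v j ∈ D.grade (deg j)) →
    ∀ a b : Fin N, (a:ℕ)+1 = (b:ℕ) →
      muRec D.d D.bracket η N deg v
        = -((-1:k)^(deg a * deg b) •
            muRec D.d D.bracket η N (deg ∘ Equiv.swap a b) (v ∘ Equiv.swap a b)) := by
  intro N
  induction N using Nat.strong_induction_on with
  | _ N ih =>
  match N with
  | 0 => intro _ _ _ a _ _; exact a.elim0
  | 1 =>
    intro _ _ _ a b hab
    have := a.isLt; have := b.isLt
    omega
  | 2 =>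
    intro deg v hv a b hab
    have ha0 : a = 0 := Fin.ext (by have := a.isLt; have := b.isLt; omega)
    have hb1 : b = 1 := Fin.ext (by have := a.isLt; have := b.isLt; omega)
    subst ha0; subst hb1
    rw [muRec, muRec]
    have e0 : (v ∘ Equiv.swap (0 : Fin 2) 1) 0 = v 1 := by
      simp [Equiv.swap_apply_left]
    have e1 : (v ∘ Equiv.swap (0 : Fin 2) 1) 1 = v 0 := by
      simp [Equiv.swap_apply_right]
    rw [e0, e1]
    have hbr := D.antisymm _ _ _ _ (hv 0) (hv 1)
    rw [hbr]
    simp only [map_neg, map_smul, smul_add, neg_add_rev, smul_neg]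
    abel
  | (n+3) =>
    intro deg v hv a b hab
    have hblt := b.isLt
    rw [mu_closed, mu_closed, smul_neg_comm_helper]
    congr 1
    rw [Finset.smul_sum, ← Finset.sum_neg_distrib]
    apply Fintype.sum_equiv (Equiv.swap a b)
    intro m
    rcases eq_or_ne m a with rfl | hma
    · -- m = a, pairs with b
      rw [Equiv.swap_apply_left]
      have hd : (fun i : Fin (n+2) => (deg ∘ Equiv.swap m b) (b.succAbove i))
          = (fun i => deg (m.succAbove i)) :=
        funext fun i => by
          simp only [Function.comp_apply, swap_succAbove_right m b hab i]
      have hv' : (fun i : Fin (n+2) => (v ∘ Equiv.swap m b) (b.succAbove i))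
          = (fun i => v (m.succAbove i)) :=
        funext fun i => by
          simp only [Function.comp_apply, swap_succAbove_right m b hab i]
      have hvb : (v ∘ Equiv.swap m b) b = v m := by
        simp [Equiv.swap_apply_right]
      have hdb : (deg ∘ Equiv.swap m b) b = deg m := by
        simp [Equiv.swap_apply_right]
      rw [hd, hv', hvb, hdb, tail_swap_gt deg m b b hab (le_refl _)]
      apply smul_eq_neg_helper
      rw [tail_insert deg m b hab,
        show (n+2-(m:ℕ)) = (n+2-(b:ℕ))+1 from by omega, pow_succ,
        show deg m * (deg b + tail deg b) = deg m * deg b + deg m * tail deg b from by ring,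
        eps_add]
      ring
    · rcases eq_or_ne m b with rfl | hmb
      · -- m = b, pairs with a
        rw [Equiv.swap_apply_right]
        have hd : (fun i : Fin (n+2) => (deg ∘ Equiv.swap a m) (a.succAbove i))
            = (fun i => deg (m.succAbove i)) :=
          funext fun i => by
            simp only [Function.comp_apply, swap_succAbove_left a m hab i]
        have hv' : (fun i : Fin (n+2) => (v ∘ Equiv.swap a m) (a.succAbove i))
            = (fun i => v (m.succAbove i)) :=
          funext fun i => by
            simp only [Function.comp_apply, swap_succAbove_left a m hab i]
        have hva : (v ∘ Equiv.swap a m) a = v m := by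
          simp [Equiv.swap_apply_left]
        have hda : (deg ∘ Equiv.swap a m) a = deg m := by
          simp [Equiv.swap_apply_left]
        have htail : tail (deg ∘ Equiv.swap a m) a = deg a + tail deg m := by
          rw [tail_insert (deg ∘ Equiv.swap a m) a m hab,
            tail_swap_gt deg a m m hab (le_refl _)]
          simp [Equiv.swap_apply_right]
        rw [hd, hv', hva, hda, htail]
        apply smul_eq_neg_helper
        have hs : ((-1:k)^(deg a * deg m)) * ((-1:k)^(deg a * deg m)) = 1 :=
          eps_mul_self _
        rw [show (n+2-(a:ℕ)) = (n+2-(m:ℕ))+1 from by omega, pow_succ,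
          show deg m * (deg a + tail deg m) = deg a * deg m + deg m * tail deg m from by ring,
          eps_add]
        linear_combination (-((-1:k)^(n+2-(m:ℕ)) * (-1:k)^(deg m * tail deg m))) * hs
      · -- m ∉ {a, b}
        have hswm : Equiv.swap a b m = m := Equiv.swap_apply_of_ne_of_ne hma hmb
        rw [hswm]
        obtain ⟨a', b', hab', hsa, hsb, hcomm⟩ := swap_succAbove_mid a b m hab hma hmb
        have hdm : (deg ∘ Equiv.swap a b) m = deg m := by
          simp [Function.comp_apply, hswm]
        have hvm : (v ∘ Equiv.swap a b) m = v m := by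
          simp [Function.comp_apply, hswm]
        have hma' : (m:ℕ) ≠ (a:ℕ) := fun h => hma (Fin.ext h)
        have hmb' : (m:ℕ) ≠ (b:ℕ) := fun h => hmb (Fin.ext h)
        have htail : tail (deg ∘ Equiv.swap a b) m = tail deg m := by
          rcases lt_or_ge (m:ℕ) (a:ℕ) with h | h
          · exact tail_swap_lt deg a b m hab h
          · exact tail_swap_gt deg a b m hab (by omega)
        have hfd : (fun i : Fin (n+2) => (deg ∘ Equiv.swap a b) (m.succAbove i))
            = (fun i => deg (m.succAbove i)) ∘ (Equiv.swap a' b') :=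
          funext fun i => by
            simp only [Function.comp_apply, hcomm i]
        have hfv : (fun i : Fin (n+2) => (v ∘ Equiv.swap a b) (m.succAbove i))
            = (fun i => v (m.succAbove i)) ∘ (Equiv.swap a' b') :=
          funext fun i => by
            simp only [Function.comp_apply, hcomm i]
        rw [hdm, hvm, htail, hfd, hfv]
        have IH := ih (n+2) (by omega) (fun i => deg (m.succAbove i))
          (fun i => v (m.succAbove i)) (fun j => hv _) a' b' hab'
        simp only [hsa, hsb] at IH
        have hZ : muRec D.d D.bracket η (n+2)
              ((fun i => deg (m.succAbove i)) ∘ Equiv.swap a' b')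
              ((fun i => v (m.succAbove i)) ∘ Equiv.swap a' b')
            = -((-1:k)^(deg a * deg b) •
                muRec D.d D.bracket η (n+2) (fun i => deg (m.succAbove i))
                  (fun i => v (m.succAbove i))) := by
          rw [IH, smul_neg, neg_neg, smul_smul, eps_mul_self, one_smul]
        rw [hZ]
        apply neg_smul_helper _ _ (eps_mul_self _)
        simp only [map_neg, map_smul, LinearMap.neg_apply, LinearMap.smul_apply]

end Stmt14Aux

theorem statement14 {k V : Type*} [Field k] [CharZero k] [AddCommGroup V] [Module k V]
    (D : GradedDGLA k V) (η : V →ₗ[k] V)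
    (hη : ∀ (i : ℤ) (v : V), v ∈ D.grade i → η v ∈ D.grade (i - 1)) :
    ∀ (n : ℕ), 1 ≤ n → ∀ (deg : Fin n → ℤ) (v : Fin n → V),
      (∀ j, v j ∈ D.grade (deg j)) →
      (∀ a b : Fin n, (a : ℕ) + 1 = (b : ℕ) →
        muRec D.d D.bracket η n deg v
          = -((-1 : k) ^ (deg a * deg b) •
              muRec D.d D.bracket η n (deg ∘ Equiv.swap a b) (v ∘ Equiv.swap a b)))
      ∧ muRec D.d D.bracket η n deg v ∈ D.grade ((∑ j, deg j) + 2 - n) := by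
  intro n _ deg v hv
  exact ⟨fun a b hab => Stmt14Aux.mu_swap D η n deg v hv a b hab,
    Stmt14Aux.mu_mem D η hη n deg v hv⟩
end
end
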